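/- Let μ > 0, σ ≥ 0, and let A be any randomized pricing mechanism (probability measure on [0,∞)). Then the worst case over distributions with variance at most σ² equals the worst case over distributions with variance exactly σ²: sup over F with mean μ and variance ≤ σ² of OPT(F)/REV(A;F) equals sup over F with mean μ and variance = σ² of OPT(F)/REV(A;F). Consequently, inf_A sup_{F ∈ 𝔽_{μ,σ}} OPT(F)/REV(A;F) = inf_A sup_{F ∈ 𝔽^=_{μ,σ}} OPT(F)/REV(A;F). -/

import Mathlib

set_option maxHeartbeats 1000000

open MeasureTheory

/-- Revenue of posting price `p` against valuation distribution `F`: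
`REV(p;F) = p · P(X ≥ p)`. -/
noncomputable def rev (F : Measure ℝ) (p : ℝ) : ℝ :=
  p * (F (Set.Ici p)).toReal

/-- Optimal revenue `OPT(F) = sup_{p ≥ 0} p · P(X ≥ p)`. -/
noncomputable def opt (F : Measure ℝ) : ℝ :=
  ⨆ p ∈ Set.Ici (0 : ℝ), rev F p

/-- Revenue of a randomized pricing mechanism `A` (a measure over prices):
`REV(A;F) = E_{p∼A}[REV(p;F)]`. -/
noncomputable def mrev (A F : Measure ℝ) : ℝ :=
  ∫ p, rev F p ∂A

/-- `F` is a `(μ,σ)`-distributed distribution: a probability measure on `[0,∞)`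
with mean `m` and variance at most `s²`. -/
structure MeanVarLe (F : Measure ℝ) (m s : ℝ) : Prop where
  prob : IsProbabilityMeasure F
  supp : F (Set.Iio 0) = 0
  int_mean : Integrable (fun x => x) F
  int_sq : Integrable (fun x => x ^ 2) F
  mean : ∫ x, x ∂F = m
  var_le : ∫ x, (x - m) ^ 2 ∂F ≤ s ^ 2

/-- A randomized pricing mechanism: a probability measure over prices in `[0,∞)`. -/
def IsPriceMech (A : Measure ℝ) : Prop :=
  IsProbabilityMeasure A ∧ A (Set.Iio 0) = 0

/-- `F` is a probability measure on `[0,∞)` with mean `m` and variance exactly `s²`. -/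
structure MeanVarEq (F : Measure ℝ) (m s : ℝ) : Prop where
  prob : IsProbabilityMeasure F
  supp : F (Set.Iio 0) = 0
  int_mean : Integrable (fun x => x) F
  int_sq : Integrable (fun x => x ^ 2) F
  mean : ∫ x, x ∂F = m
  var_eq : ∫ x, (x - m) ^ 2 ∂F = s ^ 2

/-! ### Auxiliary lemmas -/

lemma MeanVarEq.toLe {F : Measure ℝ} {m s : ℝ} (h : MeanVarEq F m s) : MeanVarLe F m s :=
  ⟨h.prob, h.supp, h.int_mean, h.int_sq, h.mean, h.var_eq.le⟩

lemma rev_measurable (F : Measure ℝ) [IsFiniteMeasure F] : Measurable (rev F) := by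
  have h : Antitone fun p : ℝ => (F (Set.Ici p)).toReal := fun p q hpq =>
    ENNReal.toReal_mono (measure_ne_top F _) (measure_mono (Set.Ici_subset_Ici.mpr hpq))
  exact measurable_id.mul h.measurable

lemma rev_nonneg (F : Measure ℝ) {p : ℝ} (hp : 0 ≤ p) : 0 ≤ rev F p :=
  mul_nonneg hp ENNReal.toReal_nonneg

lemma ae_nonneg_of_supp {F : Measure ℝ} (h : F (Set.Iio 0) = 0) :
    0 ≤ᵐ[F] fun x : ℝ => x := by
  rw [Filter.EventuallyLE, ae_iff]
  convert h using 2
  ext x; simp [not_le]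

lemma rev_le_mean {F : Measure ℝ} {m : ℝ} (hsupp : F (Set.Iio 0) = 0)
    (hint : Integrable (fun x => x) F) (hmean : ∫ x, x ∂F = m)
    (p : ℝ) : rev F p ≤ m := by
  have := mul_meas_ge_le_integral_of_nonneg (ae_nonneg_of_supp hsupp) hint p
  rwa [hmean] at this

lemma opt_le {F : Measure ℝ} {m : ℝ} (hm : 0 ≤ m)
    (hb : ∀ p, rev F p ≤ m) : opt F ≤ m := by
  refine ciSup_le fun p => ?_
  show (⨆ _ : p ∈ Set.Ici (0:ℝ), rev F p) ≤ m
  by_cases hp : p ∈ Set.Ici (0 : ℝ)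
  · rw [ciSup_pos hp]; exact hb p
  · haveI : IsEmpty (p ∈ Set.Ici (0:ℝ)) := ⟨hp⟩
    rw [Real.iSup_of_isEmpty]; exact hm

lemma le_opt {F : Measure ℝ} {m : ℝ} (hm : 0 ≤ m)
    (hb : ∀ p, rev F p ≤ m) {p : ℝ} (hp : 0 ≤ p) : rev F p ≤ opt F := by
  have hbdd : BddAbove (Set.range fun p => ⨆ _ : p ∈ Set.Ici (0:ℝ), rev F p) := by
    refine ⟨m, ?_⟩
    rintro _ ⟨q, rfl⟩
    show (⨆ _ : q ∈ Set.Ici (0:ℝ), rev F q) ≤ m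
    by_cases hq : q ∈ Set.Ici (0 : ℝ)
    · rw [ciSup_pos hq]; exact hb q
    · haveI : IsEmpty (q ∈ Set.Ici (0:ℝ)) := ⟨hq⟩
      rw [Real.iSup_of_isEmpty]; exact hm
  have hp' : p ∈ Set.Ici (0:ℝ) := hp
  have h2 : (⨆ _ : p ∈ Set.Ici (0:ℝ), rev F p) ≤ opt F := le_ciSup hbdd p
  rwa [ciSup_pos hp'] at h2

lemma opt_nonneg {F : Measure ℝ} {m : ℝ} (hm : 0 ≤ m)
    (hb : ∀ p, rev F p ≤ m) : 0 ≤ opt F := by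
  have := le_opt hm hb (le_refl (0:ℝ))
  simpa [rev] using this

lemma integrable_dirac_of_meas {f : ℝ → ℝ} (hf : Measurable f) (a : ℝ) :
    Integrable f (Measure.dirac a) := by
  refine ⟨hf.aestronglyMeasurable, ?_⟩
  simp only [HasFiniteIntegral]
  rw [lintegral_dirac' a (by measurability)]
  exact ENNReal.coe_lt_top

noncomputable def twoPoint (m a : ℝ) : Measure ℝ :=
  ENNReal.ofReal (1 - m / a) • Measure.dirac 0 + ENNReal.ofReal (m / a) • Measure.dirac a

lemma twoPoint_apply (m a : ℝ) (s : Set ℝ) :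
    twoPoint m a s = ENNReal.ofReal (1 - m / a) * Measure.dirac 0 s
      + ENNReal.ofReal (m / a) * Measure.dirac a s := by
  simp [twoPoint, Measure.add_apply, Measure.smul_apply, smul_eq_mul]

lemma twoPoint_prob {m a : ℝ} (hm : 0 < m) (hma : m ≤ a) :
    IsProbabilityMeasure (twoPoint m a) := by
  have ha : 0 < a := lt_of_lt_of_le hm hma
  have h1 : 0 ≤ m / a := div_nonneg hm.le ha.le
  have h2 : m / a ≤ 1 := (div_le_one ha).2 hma
  constructor
  rw [twoPoint_apply]
  simp only [measure_univ, mul_one]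
  rw [← ENNReal.ofReal_add (by linarith) h1, ← ENNReal.ofReal_one]
  norm_num

lemma twoPoint_supp (m a : ℝ) (ha : 0 ≤ a) : twoPoint m a (Set.Iio 0) = 0 := by
  rw [twoPoint_apply]
  rw [Measure.dirac_apply' _ measurableSet_Iio, Measure.dirac_apply' _ measurableSet_Iio]
  simp [Set.indicator, not_lt.2 ha]

lemma twoPoint_integrable {f : ℝ → ℝ} (hf : Measurable f) (m a : ℝ) :
    Integrable f (twoPoint m a) :=
  Integrable.add_measure ((integrable_dirac_of_meas hf 0).smul_measure ENNReal.ofReal_ne_top)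
    ((integrable_dirac_of_meas hf a).smul_measure ENNReal.ofReal_ne_top)

lemma twoPoint_integral {f : ℝ → ℝ} (hf : Measurable f) {m a : ℝ}
    (hm : 0 < m) (hma : m ≤ a) :
    ∫ x, f x ∂(twoPoint m a) = (1 - m / a) * f 0 + (m / a) * f a := by
  have ha : 0 < a := lt_of_lt_of_le hm hma
  have h1 : 0 ≤ m / a := div_nonneg hm.le ha.le
  have h2 : m / a ≤ 1 := (div_le_one ha).2 hma
  rw [twoPoint, integral_add_measure
    ((integrable_dirac_of_meas hf 0).smul_measure ENNReal.ofReal_ne_top)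
    ((integrable_dirac_of_meas hf a).smul_measure ENNReal.ofReal_ne_top),
    integral_smul_measure, integral_smul_measure, integral_dirac, integral_dirac,
    ENNReal.toReal_ofReal (by linarith), ENNReal.toReal_ofReal h1]
  simp [smul_eq_mul]

noncomputable def mix (ε : ℝ) (F D : Measure ℝ) : Measure ℝ :=
  ENNReal.ofReal (1 - ε) • F + ENNReal.ofReal ε • D

lemma mix_apply (ε : ℝ) (F D : Measure ℝ) (s : Set ℝ) :
    mix ε F D s = ENNReal.ofReal (1 - ε) * F s + ENNReal.ofReal ε * D s := by
  simp [mix, Measure.add_apply, Measure.smul_apply, smul_eq_mul]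

lemma mix_apply_toReal {ε : ℝ} (hε0 : 0 ≤ ε) (hε1 : ε ≤ 1) (F D : Measure ℝ)
    [IsFiniteMeasure F] [IsFiniteMeasure D] (s : Set ℝ) :
    (mix ε F D s).toReal = (1 - ε) * (F s).toReal + ε * (D s).toReal := by
  rw [mix_apply, ENNReal.toReal_add, ENNReal.toReal_mul, ENNReal.toReal_mul,
    ENNReal.toReal_ofReal (by linarith), ENNReal.toReal_ofReal hε0]
  · exact ENNReal.mul_ne_top ENNReal.ofReal_ne_top (measure_ne_top F s)
  · exact ENNReal.mul_ne_top ENNReal.ofReal_ne_top (measure_ne_top D s)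

lemma mix_prob {ε : ℝ} (hε0 : 0 ≤ ε) (hε1 : ε ≤ 1) (F D : Measure ℝ)
    [IsProbabilityMeasure F] [IsProbabilityMeasure D] :
    IsProbabilityMeasure (mix ε F D) := by
  constructor
  rw [mix_apply]
  simp only [measure_univ, mul_one]
  rw [← ENNReal.ofReal_add (by linarith) hε0, ← ENNReal.ofReal_one]
  norm_num

lemma rev_mix {ε : ℝ} (hε0 : 0 ≤ ε) (hε1 : ε ≤ 1) (F D : Measure ℝ)
    [IsFiniteMeasure F] [IsFiniteMeasure D] (p : ℝ) :
    rev (mix ε F D) p = (1 - ε) * rev F p + ε * rev D p := by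
  unfold rev
  rw [mix_apply_toReal hε0 hε1]
  ring

lemma mix_integrable {ε : ℝ} {f : ℝ → ℝ} {F D : Measure ℝ}
    (hF : Integrable f F) (hD : Integrable f D) : Integrable f (mix ε F D) :=
  Integrable.add_measure (hF.smul_measure ENNReal.ofReal_ne_top)
    (hD.smul_measure ENNReal.ofReal_ne_top)

lemma mix_integral {ε : ℝ} (hε0 : 0 ≤ ε) (hε1 : ε ≤ 1) {f : ℝ → ℝ} {F D : Measure ℝ}
    (hF : Integrable f F) (hD : Integrable f D) :
    ∫ x, f x ∂(mix ε F D) = (1 - ε) * ∫ x, f x ∂F + ε * ∫ x, f x ∂D := by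
  rw [mix, integral_add_measure (hF.smul_measure ENNReal.ofReal_ne_top)
    (hD.smul_measure ENNReal.ofReal_ne_top), integral_smul_measure, integral_smul_measure,
    ENNReal.toReal_ofReal (by linarith), ENNReal.toReal_ofReal hε0]
  simp [smul_eq_mul]

lemma mix_supp {ε : ℝ} (F D : Measure ℝ) (hF : F (Set.Iio 0) = 0) (hD : D (Set.Iio 0) = 0) :
    mix ε F D (Set.Iio 0) = 0 := by
  rw [mix_apply, hF, hD]; simp

/-- Integrability of `rev F` against a price mechanism. -/
lemma rev_integrable_mech {A F : Measure ℝ} {m : ℝ} (hm : 0 ≤ m) (hA : IsPriceMech A)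
    [IsFiniteMeasure F] (hb : ∀ p, rev F p ≤ m) : Integrable (rev F) A := by
  haveI := hA.1
  refine ⟨(rev_measurable F).aestronglyMeasurable, HasFiniteIntegral.of_bounded (C := m) ?_⟩
  have hae : ∀ᵐ p ∂A, (0:ℝ) ≤ p := ae_nonneg_of_supp hA.2
  filter_upwards [hae] with p hp
  rw [Real.norm_eq_abs, abs_le]
  exact ⟨by linarith [rev_nonneg F hp], hb p⟩

lemma mrev_le_mean {A F : Measure ℝ} {m : ℝ} (hm : 0 ≤ m) (hA : IsPriceMech A)
    [IsFiniteMeasure F] (hb : ∀ p, rev F p ≤ m) : mrev A F ≤ m := by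
  haveI := hA.1
  have h := integral_mono_ae (rev_integrable_mech hm hA hb) (integrable_const m)
    (Filter.Eventually.of_forall hb)
  simpa [mrev, measure_univ] using h

/-- The key construction: perturbing a variance-`≤ σ²` distribution into a
variance-`= σ²` distribution with controlled revenue change. -/
lemma construct {μ σ : ℝ} (hμ : 0 < μ) {F : Measure ℝ} (hF : MeanVarLe F μ σ)
    {ε : ℝ} (hε0 : 0 < ε) (hε1 : ε < 1) :
    ∃ G : Measure ℝ, MeanVarEq G μ σ ∧
      (∀ p, 0 ≤ p → (1 - ε) * rev F p ≤ rev G p) ∧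
      (∀ A : Measure ℝ, IsPriceMech A → mrev A G ≤ (1 - ε) * mrev A F + ε * μ) := by
  haveI := hF.prob
  set v : ℝ := ∫ x, (x - μ) ^ 2 ∂F with hv
  have hv0 : 0 ≤ v := integral_nonneg fun x => sq_nonneg _
  have hvσ : v ≤ σ ^ 2 := hF.var_le
  set a : ℝ := μ + (σ ^ 2 - (1 - ε) * v) / (ε * μ) with ha
  have hnum : 0 ≤ σ ^ 2 - (1 - ε) * v := by nlinarith
  have hεμ : 0 < ε * μ := mul_pos hε0 hμ
  have hma : μ ≤ a := le_add_of_nonneg_right (div_nonneg hnum hεμ.le)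
  have ha0 : 0 < a := lt_of_lt_of_le hμ hma
  set D : Measure ℝ := twoPoint μ a with hD
  haveI hDp : IsProbabilityMeasure D := twoPoint_prob hμ hma
  have hDsupp : D (Set.Iio 0) = 0 := twoPoint_supp μ a ha0.le
  have hDmean : ∫ x, x ∂D = μ := by
    rw [hD, twoPoint_integral (f := fun x : ℝ => x) measurable_id' hμ hma]
    field_simp
    ring
  have hDvar : ∫ x, (x - μ) ^ 2 ∂D = μ * (a - μ) := by
    rw [hD, twoPoint_integral (f := fun x : ℝ => (x - μ) ^ 2) (by measurability) hμ hma]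
    field_simp
    ring
  refine ⟨mix ε F D, ?_, ?_, ?_⟩
  · haveI := mix_prob hε0.le hε1.le F D
    have hintm : Integrable (fun x : ℝ => x) (mix ε F D) :=
      mix_integrable hF.int_mean (twoPoint_integrable measurable_id' μ a)
    have hintsq : Integrable (fun x : ℝ => x ^ 2) (mix ε F D) :=
      mix_integrable hF.int_sq (twoPoint_integrable (by measurability) μ a)
    have hintvF : Integrable (fun x : ℝ => (x - μ) ^ 2) F := by
      have : Integrable (fun x : ℝ => x ^ 2 - (2 * μ) * x + μ ^ 2) F :=
        (hF.int_sq.sub (hF.int_mean.const_mul (2 * μ))).add (integrable_const _)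
      exact this.congr (Filter.Eventually.of_forall fun x => by ring)
    refine ⟨inferInstance, mix_supp F D hF.supp hDsupp, hintm, hintsq, ?_, ?_⟩
    · rw [mix_integral hε0.le hε1.le hF.int_mean (twoPoint_integrable measurable_id' μ a),
        hF.mean, hDmean]
      ring
    · rw [mix_integral hε0.le hε1.le hintvF (twoPoint_integrable (by measurability) μ a),
        ← hv, hDvar]
      have : a - μ = (σ ^ 2 - (1 - ε) * v) / (ε * μ) := by rw [ha]; ring
      rw [this]
      field_simp
      ring
  · intro p hp
    rw [rev_mix hε0.le hε1.le]
    have := rev_nonneg D hp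
    nlinarith
  · intro A hA
    haveI := hA.1
    have hbF : ∀ p, rev F p ≤ μ := rev_le_mean hF.supp hF.int_mean hF.mean
    have hbD : ∀ p, rev D p ≤ μ := rev_le_mean hDsupp (twoPoint_integrable measurable_id' μ a) hDmean
    have hiF : Integrable (rev F) A := rev_integrable_mech hμ.le hA hbF
    have hiD : Integrable (rev D) A := rev_integrable_mech hμ.le hA hbD
    have hmG : mrev A (mix ε F D) = (1 - ε) * mrev A F + ε * mrev A D := by
      unfold mrev
      rw [show (fun p => rev (mix ε F D) p) = fun p => (1 - ε) * rev F p + ε * rev D p from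
        funext fun p => rev_mix hε0.le hε1.le F D p,
        integral_add (hiF.const_mul _) (hiD.const_mul _), integral_const_mul, integral_const_mul]
    rw [hmG]
    have : mrev A D ≤ μ := mrev_le_mean hμ.le hA hbD
    nlinarith

/-- `(1-ε)·opt F ≤ opt G` given the pointwise revenue comparison. -/
lemma opt_comparison {μ σ : ℝ} (hμ : 0 < μ) {F G : Measure ℝ}
    (hF : MeanVarLe F μ σ) (hG : MeanVarEq G μ σ) {ε : ℝ} (hε1 : ε < 1)
    (h : ∀ p, 0 ≤ p → (1 - ε) * rev F p ≤ rev G p) :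
    (1 - ε) * opt F ≤ opt G := by
  haveI := hF.prob; haveI := hG.prob
  have h1ε : (0:ℝ) < 1 - ε := by linarith
  have hbG : ∀ p, rev G p ≤ μ := rev_le_mean hG.supp hG.int_mean hG.mean
  have hoptG : 0 ≤ opt G := opt_nonneg hμ.le hbG
  rw [mul_comm, ← le_div_iff₀ h1ε]
  refine ciSup_le fun p => ?_
  show (⨆ _ : p ∈ Set.Ici (0:ℝ), rev F p) ≤ opt G / (1 - ε)
  by_cases hp : p ∈ Set.Ici (0 : ℝ)
  · rw [ciSup_pos hp]
    rw [le_div_iff₀ h1ε, mul_comm]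
    exact le_trans (h p hp) (le_opt hμ.le hbG hp)
  · haveI : IsEmpty (p ∈ Set.Ici (0:ℝ)) := ⟨hp⟩
    rw [Real.iSup_of_isEmpty]
    positivity

/-- Main single-mechanism lemma. -/
lemma sup_eq_sup {μ σ : ℝ} (hμ : 0 < μ) (hσ : 0 ≤ σ) (A : Measure ℝ) (hA : IsPriceMech A) :
    (⨆ F : {F : Measure ℝ // MeanVarLe F μ σ},
        ENNReal.ofReal (opt F.1) / ENNReal.ofReal (mrev A F.1)) =
      ⨆ F : {F : Measure ℝ // MeanVarEq F μ σ},
        ENNReal.ofReal (opt F.1) / ENNReal.ofReal (mrev A F.1) := by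
  apply le_antisymm
  · refine iSup_le fun F => ?_
    obtain ⟨F, hF⟩ := F
    haveI := hF.prob
    show ENNReal.ofReal (opt F) / ENNReal.ofReal (mrev A F) ≤ _
    set S := ⨆ F : {F : Measure ℝ // MeanVarEq F μ σ},
        ENNReal.ofReal (opt F.1) / ENNReal.ofReal (mrev A F.1) with hS
    set b : ℝ := mrev A F with hbdef
    set c : ℝ := opt F with hcdef
    -- key inequality from the construction, for every ε ∈ (0,1)
    have key : ∀ ε : ℝ, 0 < ε → ε < 1 →
        ENNReal.ofReal ((1 - ε) * c) / ENNReal.ofReal ((1 - ε) * b + ε * μ) ≤ S := by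
      intro ε hε0 hε1
      obtain ⟨G, hG, hrev, hmrev⟩ := construct hμ hF hε0 hε1
      refine le_trans ?_ (le_iSup (fun F : {F : Measure ℝ // MeanVarEq F μ σ} =>
        ENNReal.ofReal (opt F.1) / ENNReal.ofReal (mrev A F.1)) ⟨G, hG⟩)
      exact ENNReal.div_le_div
        (ENNReal.ofReal_le_ofReal (opt_comparison hμ hF hG hε1 hrev))
        (ENNReal.ofReal_le_ofReal (hmrev A hA))
    by_cases hb : 0 < b
    · -- take the limit ε → 0 along εₙ = 1/(n+2)
      set g : ℕ → ℝ := fun n => ((n : ℝ) + 2)⁻¹ with hg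
      have hg0 : ∀ n, 0 < g n := fun n => by positivity
      have hg1 : ∀ n, g n < 1 := fun n => by
        rw [hg]
        rw [inv_lt_one_iff₀]
        right
        have : (0:ℝ) ≤ (n:ℝ) := Nat.cast_nonneg n
        linarith
      have hgt : Filter.Tendsto g Filter.atTop (nhds 0) := by
        apply tendsto_inv_atTop_zero.comp
        exact Filter.tendsto_atTop_add_const_right _ 2 tendsto_natCast_atTop_atTop
      have hnumt : Filter.Tendsto (fun n => (1 - g n) * c) Filter.atTop (nhds c) := by
        have h1 : Filter.Tendsto (fun n => (1 - g n) * c) Filter.atTop (nhds ((1 - 0) * c)) :=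
          (tendsto_const_nhds.sub hgt).mul_const c
        simpa using h1
      have hdent : Filter.Tendsto (fun n => (1 - g n) * b + g n * μ) Filter.atTop (nhds b) := by
        have h1 : Filter.Tendsto (fun n => (1 - g n) * b + g n * μ) Filter.atTop
            (nhds ((1 - 0) * b + 0 * μ)) :=
          ((tendsto_const_nhds.sub hgt).mul_const b).add (hgt.mul_const μ)
        simpa using h1
      have hratio : Filter.Tendsto
          (fun n => ENNReal.ofReal (((1 - g n) * c) / ((1 - g n) * b + g n * μ)))
          Filter.atTop (nhds (ENNReal.ofReal (c / b))) :=
        (ENNReal.continuous_ofReal.tendsto _).comp (hnumt.div hdent hb.ne')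
      have hevent : ∀ᶠ n in Filter.atTop,
          ENNReal.ofReal (((1 - g n) * c) / ((1 - g n) * b + g n * μ))
            = ENNReal.ofReal ((1 - g n) * c) / ENNReal.ofReal ((1 - g n) * b + g n * μ) := by
        filter_upwards [hdent.eventually (eventually_gt_nhds hb)] with n hn
        rw [ENNReal.ofReal_div_of_pos hn]
      have hfin : Filter.Tendsto
          (fun n => ENNReal.ofReal ((1 - g n) * c) / ENNReal.ofReal ((1 - g n) * b + g n * μ))
          Filter.atTop (nhds (ENNReal.ofReal (c / b))) :=
        hratio.congr' hevent
      have hle2 : ENNReal.ofReal (c / b) ≤ S :=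
        le_of_tendsto hfin (Filter.Eventually.of_forall fun n => key (g n) (hg0 n) (hg1 n))
      rw [ENNReal.ofReal_div_of_pos hb] at hle2
      exact hle2
    · -- b ≤ 0, so the denominator is 0
      push_neg at hb
      by_cases hc : 0 < c
      · -- ratio is ⊤; show S = ⊤
        have hSt : S = ⊤ := by
          refine ENNReal.eq_top_of_forall_nnreal_le fun r => ?_
          set ε : ℝ := min (1/2) (c / (2 * μ * ((r : ℝ) + 1))) with hε
          have hε0 : 0 < ε := lt_min (by norm_num) (by positivity)
          have hε1 : ε < 1 := lt_of_le_of_lt (min_le_left _ _) (by norm_num)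
          refine le_trans ?_ (key ε hε0 hε1)
          have hden : (1 - ε) * b + ε * μ ≤ ε * μ := by nlinarith
          have hnum : c / 2 ≤ (1 - ε) * c := by
            have : ε ≤ 1/2 := min_le_left _ _
            nlinarith
          refine le_trans ?_ (ENNReal.div_le_div (ENNReal.ofReal_le_ofReal hnum)
            (ENNReal.ofReal_le_ofReal hden))
          rw [← ENNReal.ofReal_div_of_pos (by positivity)]
          rw [← ENNReal.ofReal_coe_nnreal]
          apply ENNReal.ofReal_le_ofReal
          have hεle : ε ≤ c / (2 * μ * ((r : ℝ) + 1)) := min_le_right _ _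
          have h1 : ε * μ ≤ c / (2 * ((r : ℝ) + 1)) := by
            have h := mul_le_mul_of_nonneg_right hεle hμ.le
            have he : c / (2 * μ * ((r:ℝ)+1)) * μ = c / (2 * ((r:ℝ)+1)) := by
              field_simp
            rwa [he] at h
          have h2 : (r : ℝ) ≤ (c / 2) / (ε * μ) := by
            rw [le_div_iff₀ (by positivity)]
            calc (r : ℝ) * (ε * μ) ≤ (r : ℝ) * (c / (2 * ((r:ℝ)+1))) := by
                  apply mul_le_mul_of_nonneg_left h1 r.coe_nonneg
            _ ≤ c / 2 := by
                  rw [← mul_div_assoc, div_le_div_iff₀ (by positivity) (by norm_num)]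
                  nlinarith [r.coe_nonneg, hc.le]
          exact h2
        rw [hSt]; exact le_top
      · push_neg at hc
        have : ENNReal.ofReal c = 0 := ENNReal.ofReal_eq_zero.2 hc
        rw [this, ENNReal.zero_div]
        exact zero_le
  · refine iSup_le fun F => ?_
    exact le_iSup_of_le ⟨F.1, F.2.toLe⟩ (le_refl _)

/-- For `μ > 0`, `σ ≥ 0` and any randomized pricing mechanism `A`, the
worst case of `OPT(F)/REV(A;F)` over distributions with mean `μ` and variance `≤ σ²`
equals the worst case over distributions with variance exactly `σ²` (ratios in `ℝ≥0∞`,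
so `c/0 = ∞` for `c > 0`); consequently the corresponding inf-sup values coincide. -/
theorem stmt12 (μ σ : ℝ) (hμ : 0 < μ) (hσ : 0 ≤ σ) :
    (∀ A : Measure ℝ, IsPriceMech A →
      (⨆ F : {F : Measure ℝ // MeanVarLe F μ σ},
          ENNReal.ofReal (opt F.1) / ENNReal.ofReal (mrev A F.1)) =
        ⨆ F : {F : Measure ℝ // MeanVarEq F μ σ},
          ENNReal.ofReal (opt F.1) / ENNReal.ofReal (mrev A F.1)) ∧
    (⨅ A : {A : Measure ℝ // IsPriceMech A},
        ⨆ F : {F : Measure ℝ // MeanVarLe F μ σ},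
          ENNReal.ofReal (opt F.1) / ENNReal.ofReal (mrev A.1 F.1)) =
      ⨅ A : {A : Measure ℝ // IsPriceMech A},
        ⨆ F : {F : Measure ℝ // MeanVarEq F μ σ},
          ENNReal.ofReal (opt F.1) / ENNReal.ofReal (mrev A.1 F.1) := by
  refine ⟨fun A hA => sup_eq_sup hμ hσ A hA, ?_⟩
  exact iInf_congr fun A => sup_eq_sup hμ hσ A.1 A.2
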